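/- Exact convolution identity: let X be standard normal and E standard exponential, independent, and let η > 0, μ > 0, x ∈ ℝ. Then P(η·X + E/μ > x) = P(η·X > x) + (1/2)·exp((μ/2)·(μη² − 2x))·(erf((x − μη²)/(√2·η)) + 1); equivalently, ∫_{−∞}^{x/η} P(E/μ > x − ηz)·e^{−z²/2}/√(2π) dz = (1/2)·exp((μ/2)·(μη² − 2x))·(erf((x − μη²)/(√2·η)) + 1). -/

import Mathlib

open MeasureTheory ProbabilityTheory Filter Real Set Topology Asymptotics

noncomputable section

/-- The Gauss error function `erf x = (2/√π) ∫_0^x e^{-t²} dt`. -/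
def erf (x : ℝ) : ℝ := (2 / Real.sqrt π) * ∫ t in (0 : ℝ)..x, Real.exp (-t ^ 2)

lemma integrable_exp_neg_sq : Integrable (fun t : ℝ => Real.exp (-t ^ 2)) := by
  simpa using integrable_exp_neg_mul_sq (one_pos)

lemma integral_exp_neg_sq_Iic (u : ℝ) :
    ∫ t in Iic u, Real.exp (-t ^ 2) = Real.sqrt π / 2 * (erf u + 1) := by
  have h0 : ∫ t in Iic (0 : ℝ), Real.exp (-t ^ 2) = Real.sqrt π / 2 := by
    have h1 := integral_comp_neg_Iic (0:ℝ) (fun t => Real.exp (-t ^ 2))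
    have h2 : ∫ t in Ioi (-(0:ℝ)), Real.exp (-t ^ 2) = Real.sqrt π / 2 := by
      rw [neg_zero]
      simpa using integral_gaussian_Ioi 1
    rw [h2] at h1
    rw [← h1]
    congr 1 with t
    rw [neg_pow]
    norm_num
  have hsub := intervalIntegral.integral_Iic_sub_Iic (f := fun t : ℝ => Real.exp (-t ^ 2)) (μ := volume)
    (a := (0:ℝ)) (b := u) integrable_exp_neg_sq.integrableOn integrable_exp_neg_sq.integrableOn
  have herf : ∫ t in (0:ℝ)..u, Real.exp (-t ^ 2) = Real.sqrt π / 2 * erf u := by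
    rw [erf]
    have hπ : Real.sqrt π ≠ 0 := by positivity
    field_simp
  rw [h0, herf] at hsub
  linarith

lemma integral_exp_sq_half_Iic (a c : ℝ) :
    ∫ z in Iic a, Real.exp (-(z - c) ^ 2 / 2)
      = Real.sqrt (2 * π) / 2 * (erf ((a - c) / Real.sqrt 2) + 1) := by
  have hshift : ∫ z in Iic a, Real.exp (-(z - c) ^ 2 / 2)
      = ∫ z in Iic (a - c), Real.exp (-z ^ 2 / 2) := by
    have h1 : ∫ z in Iic a, Real.exp (-(z - c) ^ 2 / 2)
        = ∫ z, (Iic (a - c)).indicator (fun z => Real.exp (-z ^ 2 / 2)) (z - c) := by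
      rw [← integral_indicator measurableSet_Iic]
      congr 1 with z
      by_cases hz : z ≤ a
      · rw [indicator_of_mem (mem_Iic.mpr hz), indicator_of_mem (mem_Iic.mpr (by linarith))]
      · rw [indicator_of_notMem (fun h => hz (mem_Iic.mp h)),
          indicator_of_notMem (fun h => hz (by have := mem_Iic.mp h; linarith))]
    rw [h1, integral_sub_right_eq_self _ c, integral_indicator measurableSet_Iic]
  have hs2 : (0:ℝ) < Real.sqrt 2 := by positivity
  have hscale : ∫ z in Iic (a - c), Real.exp (-z ^ 2 / 2)
      = Real.sqrt 2 * ∫ t in Iic ((a - c) / Real.sqrt 2), Real.exp (-t ^ 2) := by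
    have h1 : ∫ t in Iic ((a - c) / Real.sqrt 2), Real.exp (-t ^ 2)
        = ∫ t, (Iic (a - c)).indicator (fun z => Real.exp (-z ^ 2 / 2)) (Real.sqrt 2 * t) := by
      rw [← integral_indicator measurableSet_Iic]
      congr 1 with t
      by_cases ht : t ≤ (a - c) / Real.sqrt 2
      · have hmem : Real.sqrt 2 * t ≤ a - c := by
          rw [mul_comm]; exact (le_div_iff₀ hs2).mp ht
        rw [indicator_of_mem (mem_Iic.mpr ht), indicator_of_mem (mem_Iic.mpr hmem)]
        congr 1
        rw [mul_pow, Real.sq_sqrt (by norm_num : (0:ℝ) ≤ 2)]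
        ring
      · rw [indicator_of_notMem (fun h => ht (mem_Iic.mp h)),
          indicator_of_notMem (fun h => ht ((le_div_iff₀ hs2).mpr (by
            have := mem_Iic.mp h; linarith [mul_comm (Real.sqrt 2) t])))]
    have h2 := MeasureTheory.Measure.integral_comp_mul_left
      ((Iic (a - c)).indicator (fun z => Real.exp (-z ^ 2 / 2))) (Real.sqrt 2)
    rw [← h1] at h2
    rw [integral_indicator measurableSet_Iic] at h2
    rw [h2, abs_of_pos (inv_pos.mpr hs2), smul_eq_mul]
    field_simp
  rw [hshift, hscale, integral_exp_neg_sq_Iic]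
  rw [show Real.sqrt (2 * π) = Real.sqrt 2 * Real.sqrt π from (Real.sqrt_mul (by norm_num) π)]
  ring

lemma key_integral (η μ x : ℝ) (hη : 0 < η) (hμ : 0 < μ) :
    ∫ z in Iic (x / η),
        Real.exp (-(μ * (x - η * z))) * (Real.exp (-z ^ 2 / 2) / Real.sqrt (2 * π))
      = 1 / 2 * Real.exp (μ / 2 * (μ * η ^ 2 - 2 * x)) *
          (erf ((x - μ * η ^ 2) / (Real.sqrt 2 * η)) + 1) := by
  have hπ : (0:ℝ) < Real.sqrt (2 * π) := by positivity
  have hpt : ∀ z : ℝ,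
      Real.exp (-(μ * (x - η * z))) * (Real.exp (-z ^ 2 / 2) / Real.sqrt (2 * π))
        = Real.exp (μ / 2 * (μ * η ^ 2 - 2 * x)) / Real.sqrt (2 * π) *
            Real.exp (-(z - μ * η) ^ 2 / 2) := by
    intro z
    rw [div_mul_eq_mul_div, mul_comm, div_mul_eq_mul_div, ← Real.exp_add, ← Real.exp_add]
    congr 2
    ring
  simp_rw [hpt]
  rw [integral_const_mul, integral_exp_sq_half_Iic]
  have harg : (x / η - μ * η) / Real.sqrt 2 = (x - μ * η ^ 2) / (Real.sqrt 2 * η) := by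
    have hs2 : (0:ℝ) < Real.sqrt 2 := by positivity
    field_simp
  rw [harg]
  field_simp

lemma expMeasure_Ioi (t : ℝ) :
    (expMeasure 1) (Ioi t) = ENNReal.ofReal (min 1 (Real.exp (-t))) := by
  haveI : IsProbabilityMeasure (expMeasure 1) := isProbabilityMeasure_expMeasure one_pos
  have hIic : (expMeasure 1) (Iic t) = ENNReal.ofReal (if 0 ≤ t then 1 - Real.exp (-t) else 0) := by
    have h1 : ((expMeasure 1) (Iic t)).toReal = if 0 ≤ t then 1 - Real.exp (-t) else 0 := by
      rw [← measureReal_def, ← cdf_eq_real]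
      have := cdf_expMeasure_eq one_pos t
      simpa using this
    rw [← h1, ENNReal.ofReal_toReal (measure_ne_top _ _)]
  have hc : Ioi t = (Iic t)ᶜ := by simp
  rw [hc, prob_compl_eq_one_sub measurableSet_Iic, hIic]
  split_ifs with h
  · rw [min_eq_right (Real.exp_le_one_iff.mpr (by linarith) : Real.exp (-t) ≤ 1)]
    rw [← ENNReal.ofReal_one, ← ENNReal.ofReal_sub _ (sub_nonneg.mpr (Real.exp_le_one_iff.mpr (by linarith)))]
    norm_num
  · rw [min_eq_left (Real.one_le_exp (by linarith) : (1:ℝ) ≤ Real.exp (-t))]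
    simp

lemma expMeasure_Ioi_toReal (t : ℝ) :
    ((expMeasure 1) (Ioi t)).toReal = min 1 (Real.exp (-t)) := by
  rw [expMeasure_Ioi, ENNReal.toReal_ofReal]
  exact le_min zero_le_one (Real.exp_nonneg _)

lemma gaussianPDFReal_zero_one (z : ℝ) :
    gaussianPDFReal 0 1 z = Real.exp (-z ^ 2 / 2) / Real.sqrt (2 * π) := by
  rw [gaussianPDFReal]
  norm_num [div_eq_mul_inv, mul_comm]


/-- **Exact convolution identity.** For `η > 0`, `μ > 0`, `x ∈ ℝ`:
`ℙ(ηX + E/μ > x) = ℙ(ηX > x) + (1/2) e^{(μ/2)(μη² - 2x)} (erf((x - μη²)/(√2 η)) + 1)`, and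
equivalently `∫_{-∞}^{x/η} ℙ(E/μ > x - ηz) e^{-z²/2}/√(2π) dz` equals the same quantity. -/
theorem convolution_normal_exponential_identity
    {Ω : Type*} [MeasureSpace Ω] [IsProbabilityMeasure (ℙ : Measure Ω)]
    (X E : Ω → ℝ)
    (hX : Measure.map X (ℙ : Measure Ω) = gaussianReal 0 1)
    (hE : Measure.map E (ℙ : Measure Ω) = expMeasure 1)
    (hXE : IndepFun X E (ℙ : Measure Ω))
    (η μ x : ℝ) (hη : 0 < η) (hμ : 0 < μ) :
    (ℙ {ω | η * X ω + E ω / μ > x}).toReal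
        = (ℙ {ω | η * X ω > x}).toReal
          + 1 / 2 * Real.exp (μ / 2 * (μ * η ^ 2 - 2 * x)) *
            (erf ((x - μ * η ^ 2) / (Real.sqrt 2 * η)) + 1) ∧
    (∫ z in Iic (x / η),
        (ℙ {ω | E ω / μ > x - η * z}).toReal * (Real.exp (-z ^ 2 / 2) / Real.sqrt (2 * π)))
      = 1 / 2 * Real.exp (μ / 2 * (μ * η ^ 2 - 2 * x)) *
          (erf ((x - μ * η ^ 2) / (Real.sqrt 2 * η)) + 1) := by
  haveI hPE : IsProbabilityMeasure (expMeasure 1) := isProbabilityMeasure_expMeasure one_pos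
  have hXm : AEMeasurable X ℙ := aemeasurable_of_map_neZero (by rw [hX]; infer_instance)
  have hEm : AEMeasurable E ℙ := aemeasurable_of_map_neZero (by rw [hE]; infer_instance)
  have hEtail : ∀ s : ℝ, ℙ {ω | E ω / μ > s} = expMeasure 1 (Ioi (μ * s)) := by
    intro s
    have hset : {ω | E ω / μ > s} = E ⁻¹' (Ioi (μ * s)) := by
      ext ω
      simp only [mem_setOf_eq, mem_preimage, mem_Ioi, gt_iff_lt]
      rw [lt_div_iff₀ hμ, mul_comm]
    rw [hset, ← hE, Measure.map_apply_of_aemeasurable hEm measurableSet_Ioi]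
  -- second conjunct
  have h2 : (∫ z in Iic (x / η),
        (ℙ {ω | E ω / μ > x - η * z}).toReal * (Real.exp (-z ^ 2 / 2) / Real.sqrt (2 * π)))
      = 1 / 2 * Real.exp (μ / 2 * (μ * η ^ 2 - 2 * x)) *
          (erf ((x - μ * η ^ 2) / (Real.sqrt 2 * η)) + 1) := by
    rw [← key_integral η μ x hη hμ]
    apply setIntegral_congr_fun measurableSet_Iic
    intro z hz
    dsimp only
    have hz0 : 0 ≤ μ * (x - η * z) := by
      have h1 : z * η ≤ x := (le_div_iff₀ hη).mp (mem_Iic.mp hz)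
      nlinarith
    rw [hEtail (x - η * z), expMeasure_Ioi_toReal,
      min_eq_right (Real.exp_le_one_iff.mpr (by linarith))]
  refine ⟨?_, h2⟩
  -- first conjunct
  have hmap : Measure.map (fun ω => (X ω, E ω)) ℙ = (gaussianReal 0 1).prod (expMeasure 1) := by
    rw [← hX, ← hE]
    exact (indepFun_iff_map_prod_eq_prod_map_map hXm hEm).mp hXE
  have hS : MeasurableSet {p : ℝ × ℝ | η * p.1 + p.2 / μ > x} :=
    ((measurable_fst.const_mul η).add (measurable_snd.div_const μ)) measurableSet_Ioi
  have hPP : ℙ {ω | η * X ω + E ω / μ > x}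
      = ((gaussianReal 0 1).prod (expMeasure 1)) {p : ℝ × ℝ | η * p.1 + p.2 / μ > x} := by
    rw [← hmap, Measure.map_apply_of_aemeasurable (hXm.prodMk hEm) hS]
    rfl
  have hprod : ((gaussianReal 0 1).prod (expMeasure 1)) {p : ℝ × ℝ | η * p.1 + p.2 / μ > x}
      = ∫⁻ z, ENNReal.ofReal (min 1 (Real.exp (-(μ * (x - η * z))))) ∂(gaussianReal 0 1) := by
    rw [Measure.prod_apply hS]
    congr 1 with z
    have hZ : (Prod.mk z ⁻¹' {p : ℝ × ℝ | η * p.1 + p.2 / μ > x}) = Ioi (μ * (x - η * z)) := by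
      ext e
      simp only [mem_preimage, mem_setOf_eq, mem_Ioi, gt_iff_lt]
      rw [← sub_lt_iff_lt_add', lt_div_iff₀ hμ]
      constructor <;> intro hh <;> nlinarith
    rw [hZ, expMeasure_Ioi]
  have hf_meas : Measurable fun z : ℝ => min 1 (Real.exp (-(μ * (x - η * z)))) := by
    fun_prop
  have hf_nonneg : ∀ z : ℝ, 0 ≤ min 1 (Real.exp (-(μ * (x - η * z)))) :=
    fun z => le_min zero_le_one (Real.exp_nonneg _)
  have hBochner : (ℙ {ω | η * X ω + E ω / μ > x}).toReal
      = ∫ z, min 1 (Real.exp (-(μ * (x - η * z)))) ∂(gaussianReal 0 1) := by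
    rw [hPP, hprod,
      integral_eq_lintegral_of_nonneg_ae (ae_of_all _ hf_nonneg) hf_meas.aestronglyMeasurable]
  have hγ : gaussianReal 0 1
      = volume.withDensity (fun z => ((gaussianPDFReal 0 1 z).toNNReal : ENNReal)) := by
    rw [gaussianReal_of_var_ne_zero 0 one_ne_zero]
    rfl
  have hwd : ∫ z, min 1 (Real.exp (-(μ * (x - η * z)))) ∂(gaussianReal 0 1)
      = ∫ z, gaussianPDFReal 0 1 z * min 1 (Real.exp (-(μ * (x - η * z)))) := by
    rw [hγ, integral_withDensity_eq_integral_smul ((measurable_gaussianPDFReal 0 1).real_toNNReal) _]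
    congr 1 with z
    rw [NNReal.smul_def, smul_eq_mul, Real.coe_toNNReal _ (gaussianPDFReal_nonneg 0 1 z)]
  have hh_int : Integrable
      (fun z => gaussianPDFReal 0 1 z * min 1 (Real.exp (-(μ * (x - η * z))))) := by
    apply Integrable.mono' (integrable_gaussianPDFReal 0 1)
    · exact ((measurable_gaussianPDFReal 0 1).mul hf_meas).aestronglyMeasurable
    · refine ae_of_all _ fun z => ?_
      rw [Real.norm_eq_abs,
        abs_of_nonneg (mul_nonneg (gaussianPDFReal_nonneg 0 1 z) (hf_nonneg z))]
      exact mul_le_of_le_one_right (gaussianPDFReal_nonneg 0 1 z) (min_le_left _ _)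
  have hsplit := intervalIntegral.integral_Iic_add_Ioi (μ := volume) (b := x / η)
    hh_int.integrableOn hh_int.integrableOn
  have hIic : (∫ z in Iic (x / η),
        gaussianPDFReal 0 1 z * min 1 (Real.exp (-(μ * (x - η * z)))))
      = ∫ z in Iic (x / η),
          Real.exp (-(μ * (x - η * z))) * (Real.exp (-z ^ 2 / 2) / Real.sqrt (2 * π)) := by
    apply setIntegral_congr_fun measurableSet_Iic
    intro z hz
    dsimp only
    have hz0 : 0 ≤ μ * (x - η * z) := by
      have h1 : z * η ≤ x := (le_div_iff₀ hη).mp (mem_Iic.mp hz)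
      nlinarith
    rw [gaussianPDFReal_zero_one, min_eq_right (Real.exp_le_one_iff.mpr (by linarith))]
    ring
  have hIoi : (∫ z in Ioi (x / η),
        gaussianPDFReal 0 1 z * min 1 (Real.exp (-(μ * (x - η * z)))))
      = (ℙ {ω | η * X ω > x}).toReal := by
    have hset : {ω | η * X ω > x} = X ⁻¹' (Ioi (x / η)) := by
      ext ω
      simp only [mem_setOf_eq, mem_preimage, mem_Ioi, gt_iff_lt]
      rw [div_lt_iff₀ hη]
      constructor <;> intro hh <;> nlinarith
    have hPX : ℙ {ω | η * X ω > x} = gaussianReal 0 1 (Ioi (x / η)) := by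
      rw [hset, ← hX, Measure.map_apply_of_aemeasurable hXm measurableSet_Ioi]
    rw [hPX, gaussianReal_apply_eq_integral 0 one_ne_zero,
      ENNReal.toReal_ofReal (setIntegral_nonneg measurableSet_Ioi
        (fun z _ => gaussianPDFReal_nonneg 0 1 z))]
    apply setIntegral_congr_fun measurableSet_Ioi
    intro z hz
    dsimp only
    have hz0 : μ * (x - η * z) ≤ 0 := by
      have h1 : x < z * η := (div_lt_iff₀ hη).mp (mem_Ioi.mp hz)
      nlinarith
    rw [min_eq_left (Real.one_le_exp (by linarith)), mul_one]
  rw [hBochner, hwd, ← hsplit, hIic, key_integral η μ x hη hμ, hIoi]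
  ring

end
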